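/- Let p ≥ 11 be a prime and let c ∈ 𝔽_p be a nonzero nonsquare. Then there exist x, y ∈ 𝔽_p with x ≠ 0 and c²·x⁴ + y² + 1 = 0. -/

import Mathlib

open Finset

section QuarticCurveAux

variable {p : ℕ} [Fact p.Prime]

private lemma qc_rc {p : ℕ} [Fact p.Prime] (hp : 3 ≤ p) : ringChar (ZMod p) ≠ 2 := by
  rw [ZMod.ringChar_zmod_n]; omega

private lemma two_nz {p : ℕ} [Fact p.Prime] (hp : 3 ≤ p) : (2 : ZMod p) ≠ 0 :=
  Ring.two_ne_zero (qc_rc hp)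

private lemma sum_shift (hp : 3 ≤ p) {d : ZMod p} (hd : d ≠ 0) :
    ∑ x : ZMod p, quadraticChar (ZMod p) (x * (x + d)) = -1 := by
  classical
  set χ := quadraticChar (ZMod p) with hχ
  have h0 : χ (0 * (0 + d)) = 0 := by rw [hχ]; simp
  have hsplit : ∑ x : ZMod p, χ (x * (x + d))
      = ∑ x ∈ (univ.erase (0 : ZMod p)), χ (x * (x + d)) := by
    rw [← Finset.sum_erase_add _ _ (mem_univ (0:ZMod p)), h0, add_zero]
  rw [hsplit]
  have hbij : ∑ x ∈ (univ.erase (0 : ZMod p)), χ (x * (x + d))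
      = ∑ y ∈ (univ.erase (1 : ZMod p)), χ y := by
    apply Finset.sum_nbij' (fun x => 1 + d * x⁻¹) (fun y => d * (y - 1)⁻¹)
    · intro x hx
      simp only [mem_erase, mem_univ, and_true] at hx ⊢
      intro h
      have : d * x⁻¹ = 0 := by linear_combination h
      rcases mul_eq_zero.1 this with h' | h'
      · exact hd h'
      · exact hx (by simpa using (inv_eq_zero.mp h'))
    · intro y hy
      simp only [mem_erase, mem_univ, and_true] at hy ⊢
      intro h
      rcases mul_eq_zero.1 h with h' | h'
      · exact hd h'
      · exact hy (by
          have := inv_eq_zero.mp h'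
          have : y = 1 := by linear_combination this
          exact this)
    · intro x hx
      simp only [mem_erase, mem_univ, and_true] at hx
      field_simp
      rw [add_sub_cancel_left, div_self hd]
    · intro y hy
      simp only [mem_erase, mem_univ, and_true] at hy
      have h1 : y - 1 ≠ 0 := sub_ne_zero.mpr hy
      field_simp
      ring
    · intro x hx
      simp only [mem_erase, mem_univ, and_true] at hx
      have : x * (x + d) = x^2 * (1 + d * x⁻¹) := by field_simp
      rw [this, map_mul, quadraticChar_sq_one' hx, one_mul]
  rw [hbij]
  have := quadraticChar_sum_zero (qc_rc hp)
  have h1 : ∑ y ∈ (univ.erase (1 : ZMod p)), χ y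
      = (∑ y : ZMod p, χ y) - χ 1 := by
    rw [← Finset.sum_erase_add _ _ (mem_univ (1:ZMod p))]; ring
  rw [h1, this]; simp

private lemma sum_sq_self (hp : 3 ≤ p) :
    ∑ x : ZMod p, quadraticChar (ZMod p) (x * x) = (p : ℤ) - 1 := by
  classical
  have : ∀ x : ZMod p, quadraticChar (ZMod p) (x * x) = if x = 0 then 0 else 1 := by
    intro x
    by_cases hx : x = 0
    · simp [hx]
    · rw [← pow_two, quadraticChar_sq_one' hx, if_neg hx]
  rw [Finset.sum_congr rfl fun x _ => this x]
  rw [Finset.sum_ite, Finset.sum_const, Finset.sum_const]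
  have h1 : (univ.filter fun x : ZMod p => x = 0).card = 1 := by
    rw [Finset.filter_eq']; simp
  have h2 : (univ.filter fun x : ZMod p => ¬ x = 0).card = p - 1 := by
    rw [Finset.filter_not, Finset.filter_eq']
    simp only [mem_univ, if_true]
    rw [Finset.card_sdiff_of_subset (by simp)]
    simp [Finset.card_univ, ZMod.card]
  rw [h1, h2]
  have hp1 : 1 ≤ p := by omega
  simp only [smul_zero, zero_add, nsmul_eq_mul, mul_one]
  rw [Nat.cast_sub hp1]; simp

private lemma inner_sum' (hp : 3 ≤ p) (a b : ZMod p) :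
    ∑ n : ZMod p, quadraticChar (ZMod p) ((a^2 + n) * (b^2 + n))
      = if a^2 = b^2 then (p : ℤ) - 1 else -1 := by
  classical
  have hre : ∑ n : ZMod p, quadraticChar (ZMod p) ((a^2 + n) * (b^2 + n))
      = ∑ m : ZMod p, quadraticChar (ZMod p) (m * (m + (b^2 - a^2))) := by
    apply Finset.sum_nbij' (fun n => a^2 + n) (fun m => m - a^2) <;>
      intros <;> simp <;> ring_nf
  rw [hre]
  by_cases h : a^2 = b^2
  · rw [if_pos h]
    have : ∀ m : ZMod p, m + (b^2 - a^2) = m := by intro m; rw [← h]; ring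
    calc ∑ m : ZMod p, quadraticChar (ZMod p) (m * (m + (b^2 - a^2)))
        = ∑ m : ZMod p, quadraticChar (ZMod p) (m * m) := by
          exact Finset.sum_congr rfl fun m _ => by rw [this m]
      _ = (p : ℤ) - 1 := sum_sq_self hp
  · rw [if_neg h]
    exact sum_shift hp (sub_ne_zero.mpr fun hh => h hh.symm)

noncomputable def Fj (p : ℕ) [Fact p.Prime] (n : ZMod p) : ℤ :=
  ∑ t : ZMod p, quadraticChar (ZMod p) (t * (t^2 + n))

variable {p : ℕ} [Fact p.Prime]

private lemma sum_if_zero (c : ℤ) :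
    ∑ a : ZMod p, (if a = 0 then 0 else c) = ((p:ℤ) - 1) * c := by
  classical
  rw [Finset.sum_ite, Finset.sum_const, Finset.sum_const]
  have h2 : (univ.filter fun x : ZMod p => ¬ x = 0).card = p - 1 := by
    rw [Finset.filter_not, Finset.filter_eq']
    simp only [mem_univ, if_true]
    rw [Finset.card_sdiff_of_subset (by simp)]
    simp [Finset.card_univ, ZMod.card]
  rw [h2]
  have hp1 : 1 ≤ p := (Fact.out : p.Prime).one_lt.le
  simp only [smul_zero, zero_add, nsmul_eq_mul]
  rw [Nat.cast_sub hp1]; simp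

private lemma sum_Fj_sq (hp : 3 ≤ p) (hneg : quadraticChar (ZMod p) (-1) = 1) :
    ∑ n : ZMod p, (Fj p n)^2 = 2 * p * ((p : ℤ) - 1) := by
  classical
  set χ := quadraticChar (ZMod p) with hχ
  have expand : ∀ n : ZMod p, (Fj p n)^2
      = ∑ a : ZMod p, ∑ b : ZMod p, χ (a * b) * χ ((a^2 + n) * (b^2 + n)) := by
    intro n
    rw [pow_two, Fj, Finset.sum_mul_sum]
    refine Finset.sum_congr rfl fun a _ => Finset.sum_congr rfl fun b _ => ?_
    rw [← map_mul, ← map_mul]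
    exact congrArg _ (by ring)
  calc ∑ n : ZMod p, (Fj p n)^2
      = ∑ n : ZMod p, ∑ a : ZMod p, ∑ b : ZMod p, χ (a * b) * χ ((a^2 + n) * (b^2 + n)) :=
        Finset.sum_congr rfl fun n _ => expand n
    _ = ∑ a : ZMod p, ∑ b : ZMod p, χ (a * b) * ∑ n : ZMod p, χ ((a^2 + n) * (b^2 + n)) := by
        rw [Finset.sum_comm]
        refine Finset.sum_congr rfl fun a _ => ?_
        rw [Finset.sum_comm]
        refine Finset.sum_congr rfl fun b _ => ?_
        rw [Finset.mul_sum]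
    _ = ∑ a : ZMod p, ∑ b : ZMod p, χ (a * b) * (if a^2 = b^2 then (p : ℤ) - 1 else -1) := by
        refine Finset.sum_congr rfl fun a _ => Finset.sum_congr rfl fun b _ => ?_
        rw [hχ, inner_sum' hp a b]
    _ = ∑ a : ZMod p, ∑ b : ZMod p,
          (χ (a * b) * (-1) + if a^2 = b^2 then χ (a * b) * p else 0) := by
        refine Finset.sum_congr rfl fun a _ => Finset.sum_congr rfl fun b _ => ?_
        by_cases h : a^2 = b^2 <;> simp [h] <;> ring
    _ = 2 * p * ((p : ℤ) - 1) := by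
        have split : ∀ a : ZMod p, ∑ b : ZMod p,
            (χ (a * b) * (-1) + if a^2 = b^2 then χ (a * b) * p else 0)
            = (∑ b : ZMod p, χ (a * b) * (-1)) +
              ∑ b : ZMod p, (if a^2 = b^2 then χ (a * b) * p else 0) :=
          fun a => Finset.sum_add_distrib
        rw [Finset.sum_congr rfl fun a _ => split a, Finset.sum_add_distrib]
        have first : ∑ a : ZMod p, ∑ b : ZMod p, χ (a * b) * (-1) = 0 := by
          have : ∀ a : ZMod p, ∑ b : ZMod p, χ (a * b) * (-1)
              = χ a * (-1) * ∑ b : ZMod p, χ b := by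
            intro a
            rw [Finset.mul_sum]
            refine Finset.sum_congr rfl fun b _ => by rw [map_mul]; ring
          rw [Finset.sum_congr rfl fun a _ => this a]
          rw [hχ, quadraticChar_sum_zero (qc_rc hp)]
          simp
        have second : ∀ a : ZMod p,
            (∑ b : ZMod p, if a^2 = b^2 then χ (a * b) * p else 0)
            = if a = 0 then (0:ℤ) else 2 * p := by
          intro a
          by_cases ha : a = 0
          · subst ha
            rw [if_pos rfl]
            refine Finset.sum_eq_zero fun b _ => ?_
            split
            · rw [hχ]; simp
            · rfl
          · rw [if_neg ha]
            have hfil : (univ.filter fun b : ZMod p => a^2 = b^2) = {a, -a} := by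
              ext b
              simp only [mem_filter, mem_univ, true_and, mem_insert, mem_singleton]
              constructor
              · intro h
                have : (b - a) * (b + a) = 0 := by linear_combination -h
                rcases mul_eq_zero.1 this with h' | h'
                · left; exact sub_eq_zero.mp h'
                · right; linear_combination h'
              · rintro (rfl | rfl) <;> ring
            rw [← Finset.sum_filter, hfil]
            have h2' : (2 : ZMod p) ≠ 0 := Ring.two_ne_zero (qc_rc hp)
            have hne : a ≠ -a := by
              intro h
              have h2 : (2 : ZMod p) * a = 0 := by linear_combination h
              exact ha ((mul_eq_zero.mp h2).resolve_left h2')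
            rw [Finset.sum_insert (by simpa using hne), Finset.sum_singleton]
            have h1 : χ (a * a) = 1 := by
              rw [← pow_two, hχ]; exact quadraticChar_sq_one' ha
            have h2 : χ (a * -a) = 1 := by
              have he : a * -a = -1 * (a * a) := by ring
              rw [he, map_mul, h1, hχ, hneg, mul_one]
            rw [h1, h2]; ring
        rw [first, zero_add, Finset.sum_congr rfl fun a _ => second a, sum_if_zero]
        ring

private lemma Fj_scale {u : ZMod p} (hu : u ≠ 0) :
    Fj p (-(u^2)) = quadraticChar (ZMod p) u * Fj p (-1) := by
  classical
  set χ := quadraticChar (ZMod p) with hχ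
  have : ∀ s : ZMod p, χ (u*s * ((u*s)^2 + -(u^2))) = χ u * χ (s * (s^2 + -1)) := by
    intro s
    have he : u*s * ((u*s)^2 + -(u^2)) = u * (u*u) * (s * (s^2 + -1)) := by ring
    rw [he, map_mul, map_mul, ← pow_two, hχ, quadraticChar_sq_one' hu, mul_one]
  calc Fj p (-(u^2)) = ∑ s : ZMod p, χ (u*s * ((u*s)^2 + -(u^2))) := by
        rw [Fj]
        exact (Finset.sum_bijective (fun s => u*s)
          (mulLeft_bijective₀ u hu) (by simp) (fun s _ => rfl)).symm
    _ = χ u * Fj p (-1) := by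
        rw [Finset.sum_congr rfl fun s _ => this s, ← Finset.mul_sum, Fj]

private lemma Fj_zero_eq (hp : 3 ≤ p) : Fj p 0 = 0 := by
  classical
  have : ∀ t : ZMod p, quadraticChar (ZMod p) (t * (t^2 + 0)) = quadraticChar (ZMod p) t := by
    intro t
    by_cases ht : t = 0
    · simp [ht]
    · have he : t * (t^2 + 0) = t^2 * t := by ring
      rw [he, map_mul, quadraticChar_sq_one' ht, one_mul]
  rw [Fj, Finset.sum_congr rfl fun t _ => this t]
  exact quadraticChar_sum_zero (qc_rc hp)

private lemma Fj_bound (hp : 3 ≤ p) (hneg : quadraticChar (ZMod p) (-1) = 1) :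
    (Fj p (-1))^2 ≤ 4 * p := by
  classical
  have key : ((p:ℤ) - 1) * (Fj p (-1))^2 = ∑ u : ZMod p, (Fj p (-(u^2)))^2 := by
    have : ∀ u : ZMod p, (Fj p (-(u^2)))^2 = if u = 0 then 0 else (Fj p (-1))^2 := by
      intro u
      by_cases hu : u = 0
      · simp [hu, Fj_zero_eq hp]
      · rw [if_neg hu, Fj_scale hu, mul_pow,
          quadraticChar_sq_one hu, one_mul]
    rw [Finset.sum_congr rfl fun u _ => this u, sum_if_zero]
  have comp : ∑ u : ZMod p, (Fj p (-(u^2)))^2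
      ≤ 2 * ∑ n : ZMod p, (Fj p n)^2 := by
    rw [Finset.sum_comp (fun n => (Fj p n)^2) (fun u : ZMod p => -(u^2))]
    have card_le : ∀ b ∈ univ.image (fun u : ZMod p => -(u^2)),
        ((univ.filter fun u : ZMod p => -(u^2) = b).card : ℤ) ≤ 2 := by
      intro b hb
      simp only [mem_image, mem_univ, true_and] at hb
      obtain ⟨u₀, hu₀⟩ := hb
      have hsub : (univ.filter fun u : ZMod p => -(u^2) = b) ⊆ {u₀, -u₀} := by
        intro u hu
        simp only [mem_filter, mem_univ, true_and] at hu
        simp only [mem_insert, mem_singleton]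
        have : (u - u₀) * (u + u₀) = 0 := by linear_combination -hu + hu₀
        rcases mul_eq_zero.1 this with h' | h'
        · left; exact sub_eq_zero.mp h'
        · right; linear_combination h'
      calc ((univ.filter fun u : ZMod p => -(u^2) = b).card : ℤ)
          ≤ (({u₀, -u₀} : Finset (ZMod p)).card : ℤ) := by
            exact_mod_cast Nat.cast_le.mpr (Finset.card_le_card hsub)
        _ ≤ 2 := by
            have := Finset.card_insert_le u₀ ({-u₀} : Finset (ZMod p))
            simp only [Finset.card_singleton] at this
            exact_mod_cast this
    calc ∑ b ∈ univ.image (fun u : ZMod p => -(u^2)),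
          ((univ.filter fun u : ZMod p => -(u^2) = b).card) • (Fj p b)^2
        ≤ ∑ b ∈ univ.image (fun u : ZMod p => -(u^2)), 2 * (Fj p b)^2 := by
          refine Finset.sum_le_sum fun b hb => ?_
          rw [nsmul_eq_mul]
          exact mul_le_mul_of_nonneg_right (card_le b hb) (sq_nonneg _)
      _ ≤ ∑ b : ZMod p, 2 * (Fj p b)^2 := by
          refine Finset.sum_le_sum_of_subset_of_nonneg (Finset.subset_univ _)
            fun b _ _ => ?_
          positivity
      _ = 2 * ∑ n : ZMod p, (Fj p n)^2 := by rw [Finset.mul_sum]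
  rw [sum_Fj_sq hp hneg] at comp
  rw [← key] at comp
  have hp1 : (0:ℤ) < (p:ℤ) - 1 := by
    have h2 : (3:ℤ) ≤ (p:ℤ) := by exact_mod_cast hp
    linarith
  nlinarith [sq_nonneg (Fj p (-1))]

private lemma exists_t (hp : 13 ≤ p) (hneg : quadraticChar (ZMod p) (-1) = 1) :
    ∃ t : ZMod p, quadraticChar (ZMod p) ((-2) * (t * (t^2 + -1))) = -1 := by
  classical
  by_contra hno
  push_neg at hno
  have hp3 : 3 ≤ p := by omega
  have h2 : (2 : ZMod p) ≠ 0 := two_nz hp3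
  have hzero : ∀ t : ZMod p, ((-2) * (t * (t^2 + -1)) = 0) ↔ (t = 0 ∨ t = 1 ∨ t = -1) := by
    intro t
    constructor
    · intro h
      rcases mul_eq_zero.1 h with h' | h'
      · exact absurd h' (by simpa using h2)
      · rcases mul_eq_zero.1 h' with h'' | h''
        · exact Or.inl h''
        · have : (t - 1) * (t + 1) = 0 := by linear_combination h''
          rcases mul_eq_zero.1 this with h3 | h3
          · exact Or.inr (Or.inl (sub_eq_zero.mp h3))
          · exact Or.inr (Or.inr (by linear_combination h3))
    · rintro (rfl | rfl | rfl) <;> ring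
  have hterm : ∀ t : ZMod p, quadraticChar (ZMod p) ((-2) * (t * (t^2 + -1)))
      = if t = 0 ∨ t = 1 ∨ t = -1 then 0 else 1 := by
    intro t
    by_cases ht : t = 0 ∨ t = 1 ∨ t = -1
    · rw [if_pos ht, (hzero t).mpr ht]
      simp
    · rw [if_neg ht]
      have harg : (-2) * (t * (t^2 + -1)) ≠ 0 := fun h => ht ((hzero t).mp h)
      rcases quadraticChar_dichotomy harg with h | h
      · exact h
      · exact absurd h (hno t)
  have hsum : ∑ t : ZMod p, quadraticChar (ZMod p) ((-2) * (t * (t^2 + -1)))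
      = (p : ℤ) - 3 := by
    rw [Finset.sum_congr rfl fun t _ => hterm t]
    rw [Finset.sum_ite, Finset.sum_const, Finset.sum_const]
    have h01 : (0 : ZMod p) ≠ 1 := by
      intro h; exact one_ne_zero (α := ZMod p) h.symm
    have h0m1 : (0 : ZMod p) ≠ -1 := by
      intro h
      exact one_ne_zero (α := ZMod p) (by linear_combination h)
    have h1m1 : (1 : ZMod p) ≠ -1 := by
      intro h
      exact h2 (by linear_combination h)
    have hfil : (univ.filter fun t : ZMod p => t = 0 ∨ t = 1 ∨ t = -1)
        = {0, 1, -1} := by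
      ext t
      simp [mem_insert, mem_singleton]
    have hcard : (univ.filter fun t : ZMod p => t = 0 ∨ t = 1 ∨ t = -1).card = 3 := by
      rw [hfil]
      rw [Finset.card_insert_of_notMem (by simp [h01, h0m1]),
        Finset.card_insert_of_notMem (by simp [h1m1]), Finset.card_singleton]
    have hcard2 : (univ.filter fun t : ZMod p => ¬(t = 0 ∨ t = 1 ∨ t = -1)).card = p - 3 := by
      rw [Finset.filter_not, Finset.card_sdiff_of_subset (Finset.filter_subset _ _), hcard,
        Finset.card_univ, ZMod.card]
    rw [hcard2]
    have hp3n : 3 ≤ p := hp3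
    simp only [smul_zero, zero_add, nsmul_eq_mul, mul_one]
    rw [Nat.cast_sub hp3n]
    norm_num
  have hfac : ∑ t : ZMod p, quadraticChar (ZMod p) ((-2) * (t * (t^2 + -1)))
      = quadraticChar (ZMod p) (-2) * Fj p (-1) := by
    rw [Fj, Finset.mul_sum]
    exact Finset.sum_congr rfl fun t _ => by rw [map_mul]
  have hm2 : (-2 : ZMod p) ≠ 0 := by simpa using two_nz hp3
  have hsq2 : quadraticChar (ZMod p) (-2) ^ 2 = 1 := quadraticChar_sq_one hm2
  have hb := Fj_bound hp3 hneg
  have hkey : ((p:ℤ) - 3)^2 ≤ 4 * p := by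
    have : ((p:ℤ) - 3)^2 = (quadraticChar (ZMod p) (-2))^2 * (Fj p (-1))^2 := by
      rw [← hsum, hfac, mul_pow]
    rw [this, hsq2, one_mul]
    exact hb
  have hp13 : (13:ℤ) ≤ (p:ℤ) := by exact_mod_cast hp
  nlinarith

private lemma finish_step (c m y : ZMod p)
    (hcχ : quadraticChar (ZMod p) c = -1) (hmχ : quadraticChar (ZMod p) m = -1)
    (hmy : m^2 + y^2 + 1 = 0) :
    ∃ x y : ZMod p, x ≠ 0 ∧ c ^ 2 * x ^ 4 + y ^ 2 + 1 = 0 := by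
  have hc0 : c ≠ 0 := fun h => by simp [h] at hcχ
  have hm0 : m ≠ 0 := fun h => by simp [h] at hmχ
  have hmc0 : m * c⁻¹ ≠ 0 := mul_ne_zero hm0 (inv_ne_zero hc0)
  have hmul : quadraticChar (ZMod p) (m * c⁻¹) * quadraticChar (ZMod p) c
      = quadraticChar (ZMod p) m := by
    rw [← map_mul]
    congr 1
    field_simp
  rw [hcχ, hmχ] at hmul
  have h1 : quadraticChar (ZMod p) (m * c⁻¹) = 1 := by linarith
  obtain ⟨r, hr⟩ := (quadraticChar_one_iff_isSquare hmc0).mp h1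
  have hr0 : r ≠ 0 := by
    rintro rfl
    rw [mul_zero] at hr
    exact hmc0 hr
  have hm : m = c * r^2 := by
    have := congrArg (· * c) hr
    field_simp at this
    rw [this]
  refine ⟨r, y, hr0, ?_⟩
  rw [hm] at hmy
  linear_combination hmy

private lemma branch3 (hp : 11 ≤ p) (hsq : ¬ IsSquare (-1 : ZMod p)) (c : ZMod p)
    (hcχ : quadraticChar (ZMod p) c = -1) :
    ∃ x y : ZMod p, x ≠ 0 ∧ c ^ 2 * x ^ 4 + y ^ 2 + 1 = 0 := by
  have hneg : quadraticChar (ZMod p) (-1) = -1 :=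
    quadraticChar_neg_one_iff_not_isSquare.mpr hsq
  obtain ⟨a, b, hab⟩ := ZMod.sq_add_sq p (-1 : ZMod p)
  have hne : a ≠ 0 ∨ b ≠ 0 := by
    by_contra h
    push_neg at h
    rw [h.1, h.2] at hab
    have h0 : (0 : ZMod p) = -1 := by simpa using hab
    exact one_ne_zero (show (1:ZMod p) = 0 by linear_combination h0)
  have main : ∀ a b : ZMod p, a ≠ 0 → a^2 + b^2 = -1 →
      ∃ x y : ZMod p, x ≠ 0 ∧ c ^ 2 * x ^ 4 + y ^ 2 + 1 = 0 := by
    intro a b ha hab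
    have hdi := quadraticChar_dichotomy (F := ZMod p) ha
    rcases hdi with h | h
    · have hma : quadraticChar (ZMod p) (-a) = -1 := by
        have : (-a : ZMod p) = -1 * a := by ring
        rw [this, map_mul, hneg, h]; ring
      refine finish_step c (-a) b hcχ hma ?_
      linear_combination hab
    · exact finish_step c a b hcχ h (by linear_combination hab)
  rcases hne with ha | hb
  · exact main a b ha hab
  · exact main b a hb (by linear_combination hab)

private lemma branch1 (hp : 11 ≤ p) (hsq : IsSquare (-1 : ZMod p)) (c : ZMod p)
    (hcχ : quadraticChar (ZMod p) c = -1) :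
    ∃ x y : ZMod p, x ≠ 0 ∧ c ^ 2 * x ^ 4 + y ^ 2 + 1 = 0 := by
  have hmod : p % 4 ≠ 3 := (ZMod.exists_sq_eq_neg_one_iff).mp hsq
  have hodd : p % 2 = 1 := Nat.odd_iff.mp ((Fact.out : p.Prime).odd_of_ne_two (by omega))
  have hp13 : 13 ≤ p := by omega
  have hp3 : 3 ≤ p := by omega
  have hneg : quadraticChar (ZMod p) (-1) = 1 :=
    (quadraticChar_one_iff_isSquare (neg_ne_zero.mpr one_ne_zero)).mpr hsq
  obtain ⟨t, ht⟩ := exists_t hp13 hneg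
  have ht0 : t ≠ 0 := by
    rintro rfl
    norm_num at ht
  obtain ⟨i, hi⟩ := hsq
  set m : ZMod p := (t⁻¹ - t) / 2 with hm
  set w : ZMod p := (t⁻¹ + t) / 2 with hw
  have h2 : (2 : ZMod p) ≠ 0 := two_nz hp3
  have h2t : 2 * t ≠ 0 := mul_ne_zero h2 ht0
  have hmχ : quadraticChar (ZMod p) m = -1 := by
    have harg : m * (2*t)^2 = (-2) * (t * (t^2 + -1)) := by
      rw [hm]
      field_simp
      ring
    calc quadraticChar (ZMod p) m
        = quadraticChar (ZMod p) m * quadraticChar (ZMod p) ((2*t)^2) := by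
          rw [quadraticChar_sq_one' h2t, mul_one]
      _ = quadraticChar (ZMod p) (m * (2*t)^2) := (map_mul _ _ _).symm
      _ = -1 := by rw [harg]; exact ht
  have hmy : m^2 + (i * w)^2 + 1 = 0 := by
    have hii : i * i = -1 := hi.symm
    have hiw : (i * w)^2 = -(w^2) := by
      rw [mul_pow, pow_two i, hii]; ring
    rw [hiw, hm, hw]
    field_simp
    ring
  exact finish_step c m (i * w) hcχ hmχ hmy

end QuarticCurveAux

/-- For a prime `p ≥ 11` and a nonzero nonsquare `c ∈ 𝔽_p`, the curve
`c² x⁴ + y² + 1 = 0`, `x ≠ 0` has an `𝔽_p`-point. -/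
theorem exists_point_on_quartic_curve (p : ℕ) [Fact p.Prime] (hp : 11 ≤ p)
    (c : ZMod p) (hc0 : c ≠ 0) (hc : ¬∃ d : ZMod p, d ^ 2 = c) :
    ∃ x y : ZMod p, x ≠ 0 ∧ c ^ 2 * x ^ 4 + y ^ 2 + 1 = 0 := by
  have hcχ : quadraticChar (ZMod p) c = -1 := by
    apply quadraticChar_neg_one_iff_not_isSquare.mpr
    rintro ⟨r, hr⟩
    exact hc ⟨r, by rw [pow_two]; exact hr.symm⟩
  by_cases hsq : IsSquare (-1 : ZMod p)
  · exact branch1 hp hsq c hcχ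
  · exact branch3 hp hsq c hcχ
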